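/- Let μ be a regular Borel probability measure on [0,1]^n. Then ∫_{[0,1]^n} f dμ > 0 for every McNaughton function f on [0,1]^n that is not identically 0 if and only if μ is strictly positive, i.e., μ(O) > 0 for every nonempty open subset O of [0,1]^n. -/

import Mathlib

open Set MeasureTheory

/-- The unit cube `[0,1]^n` in `ℝ^n`. -/
def cube (n : ℕ) : Set (Fin n → ℝ) := Set.Icc 0 1

/-- `f` is a McNaughton function on `[0,1]^n`: continuous on the cube, `[0,1]`-valued there,
and piecewise affine with integer coefficients. -/
def IsMcNaughton (n : ℕ) (f : (Fin n → ℝ) → ℝ) : Prop :=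
  ContinuousOn f (cube n) ∧
  (∀ x ∈ cube n, f x ∈ Set.Icc (0 : ℝ) 1) ∧
  ∃ (m : ℕ) (a : Fin m → Fin n → ℤ) (b : Fin m → ℤ),
    ∀ x ∈ cube n, ∃ j : Fin m, f x = (b j : ℝ) + ∑ i, (a j i : ℝ) * x i

/-- Pieces indexed by any fintype suffice. -/
lemma rep_of_fintype {n : ℕ} {f : (Fin n → ℝ) → ℝ} {ι : Type} [Fintype ι]
    (a : ι → Fin n → ℤ) (b : ι → ℤ)
    (h : ∀ x ∈ cube n, ∃ j : ι, f x = (b j : ℝ) + ∑ i, (a j i : ℝ) * x i) :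
    ∃ (m : ℕ) (a' : Fin m → Fin n → ℤ) (b' : Fin m → ℤ),
      ∀ x ∈ cube n, ∃ j : Fin m, f x = (b' j : ℝ) + ∑ i, (a' j i : ℝ) * x i := by
  refine ⟨Fintype.card ι, a ∘ (Fintype.equivFin ι).symm, b ∘ (Fintype.equivFin ι).symm, ?_⟩
  intro x hx
  obtain ⟨j, hj⟩ := h x hx
  exact ⟨Fintype.equivFin ι j, by simpa using hj⟩

theorem stmt8 (n : ℕ) (μ : Measure (cube n)) (hprob : IsProbabilityMeasure μ)
    (hreg : μ.Regular) :
    (∀ f, IsMcNaughton n f → (∃ x ∈ cube n, f x ≠ 0) → 0 < ∫ x, f ↑x ∂μ) ↔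
    (∀ O : Set (cube n), IsOpen O → O.Nonempty → 0 < μ O) := by
  constructor
  · -- forward
    intro H O hO hOne
    rcases Nat.eq_zero_or_pos n with hn | hn
    · -- n = 0 : the cube is a subsingleton, so O = univ
      subst hn
      haveI : Subsingleton (Fin 0 → ℝ) := ⟨fun a b => funext fun i => absurd i.2 (Nat.not_lt_zero _)⟩
      haveI : Subsingleton (cube 0) := ⟨fun a b => Subtype.ext (Subsingleton.elim _ _)⟩
      obtain ⟨p, hp⟩ := hOne
      have : O = Set.univ := Set.eq_univ_of_forall fun y => Subsingleton.elim p y ▸ hp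
      rw [this]
      simp
    · obtain ⟨p, hp⟩ := hOne
      obtain ⟨U, hUopen, hU⟩ := isOpen_induced_iff.mp hO
      have hpU : (p : Fin n → ℝ) ∈ U := by rw [← hU] at hp; exact hp
      obtain ⟨ε, hε, hball⟩ := Metric.isOpen_iff.mp hUopen _ hpU
      obtain ⟨k, hk⟩ := exists_nat_ge ((n + 1/2) / ε)
      have hkε : (n : ℝ) + 1/2 ≤ k * ε := by
        rw [div_le_iff₀ hε] at hk; linarith
      set c : Fin n → ℤ := fun i => round ((k : ℝ) * (p : Fin n → ℝ) i) with hc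
      set f : (Fin n → ℝ) → ℝ :=
        fun x => min 1 (max 0 ((n : ℝ) - ∑ i, |(k : ℝ) * x i - (c i : ℝ)|)) with hf
      -- basic estimates
      have hround : ∀ i, |(k : ℝ) * (p : Fin n → ℝ) i - (c i : ℝ)| ≤ 1/2 := fun i =>
        abs_sub_round _
      have hfp : 0 < f p := by
        have hsum : ∑ i, |(k : ℝ) * (p : Fin n → ℝ) i - (c i : ℝ)| ≤ n * (1/2) := by
          calc ∑ i, |(k : ℝ) * (p : Fin n → ℝ) i - (c i : ℝ)|
              ≤ ∑ _i : Fin n, (1/2 : ℝ) := Finset.sum_le_sum fun i _ => hround i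
            _ = n * (1/2) := by simp [mul_comm]
        have h1 : (0 : ℝ) < (n : ℝ) - ∑ i, |(k : ℝ) * (p : Fin n → ℝ) i - (c i : ℝ)| := by
          have : (0 : ℝ) < n := by exact_mod_cast hn
          nlinarith
        simp only [hf]
        exact lt_min one_pos (lt_max_of_lt_right h1)
      have hcont : Continuous f := by
        apply Continuous.min continuous_const
        apply Continuous.max continuous_const
        exact (continuous_const.sub (continuous_finset_sum _ fun i _ =>
          ((continuous_const.mul (continuous_apply i)).sub continuous_const).abs))
      have hrange : ∀ x, f x ∈ Set.Icc (0 : ℝ) 1 :=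
        fun x => ⟨le_min one_pos.le (le_max_left _ _), min_le_left _ _⟩
      -- vanishing outside O
      have hvanish : ∀ x : cube n, x ∉ O → f (x : Fin n → ℝ) = 0 := by
        intro x hx
        have hxU : (x : Fin n → ℝ) ∉ U := by rw [← hU] at hx; exact hx
        have hdist : ¬ dist (x : Fin n → ℝ) (p : Fin n → ℝ) < ε := fun h =>
          hxU (hball (by simpa [Metric.mem_ball] using h))
        rw [dist_pi_lt_iff hε] at hdist
        push_neg at hdist
        obtain ⟨i, hi⟩ := hdist
        have hbig : (n : ℝ) ≤ |(k : ℝ) * (x : Fin n → ℝ) i - (c i : ℝ)| := by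
          have h1 : (k : ℝ) * ε ≤ (k : ℝ) * |(x : Fin n → ℝ) i - (p : Fin n → ℝ) i| := by
            have hk0 : (0 : ℝ) ≤ k := Nat.cast_nonneg k
            rw [Real.dist_eq] at hi
            exact mul_le_mul_of_nonneg_left hi hk0
          have h2 : (k : ℝ) * |(x : Fin n → ℝ) i - (p : Fin n → ℝ) i|
              = |(k : ℝ) * (x : Fin n → ℝ) i - (k : ℝ) * (p : Fin n → ℝ) i| := by
            rw [← mul_sub, abs_mul, abs_of_nonneg (Nat.cast_nonneg k : (0:ℝ) ≤ (k:ℝ))]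
          have h4 : |(k : ℝ) * (x : Fin n → ℝ) i - (c i : ℝ) -
              ((k : ℝ) * (p : Fin n → ℝ) i - (c i : ℝ))|
              = |(k : ℝ) * (x : Fin n → ℝ) i - (k : ℝ) * (p : Fin n → ℝ) i| := by ring_nf
          have h6 := abs_sub ((k : ℝ) * (x : Fin n → ℝ) i - (c i : ℝ))
            ((k : ℝ) * (p : Fin n → ℝ) i - (c i : ℝ))
          rw [h4] at h6
          have := hround i
          linarith
        have hsum : (n : ℝ) ≤ ∑ j, |(k : ℝ) * (x : Fin n → ℝ) j - (c j : ℝ)| :=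
          le_trans hbig (Finset.single_le_sum (f := fun j => |(k : ℝ) * (x : Fin n → ℝ) j - (c j : ℝ)|)
            (fun j _ => abs_nonneg _) (Finset.mem_univ i))
        simp only [hf]
        rw [max_eq_left (by linarith), min_eq_right (by norm_num)]
      -- McNaughton structure
      have hMc : IsMcNaughton n f := by
        refine ⟨hcont.continuousOn, fun x _ => hrange x, ?_⟩
        apply rep_of_fintype (ι := Option (Option (Fin n → Bool)))
          (a := fun j => match j with
            | none => 0
            | some none => 0
            | some (some σ) => fun i => -(if σ i then 1 else -1) * k)
          (b := fun j => match j with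
            | none => 0
            | some none => 1
            | some (some σ) => n + ∑ i, (if σ i then 1 else -1) * c i)
        intro x _
        set t : ℝ := (n : ℝ) - ∑ i, |(k : ℝ) * x i - (c i : ℝ)| with ht
        rcases le_or_gt t 0 with h0 | h0
        · refine ⟨none, ?_⟩
          simp only [hf]
          rw [max_eq_left h0, min_eq_right (by norm_num)]
          simp
        rcases le_or_gt 1 t with h1 | h1
        · refine ⟨some none, ?_⟩
          simp only [hf]
          rw [max_eq_right h0.le, min_eq_left h1]
          simp
        · refine ⟨some (some (fun i => decide ((c i : ℝ) ≤ (k : ℝ) * x i))), ?_⟩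
          have hfx : f x = t := by
            simp only [hf]
            rw [max_eq_right h0.le, min_eq_right h1.le]
          rw [hfx, ht]
          have habs : ∀ i, |(k : ℝ) * x i - (c i : ℝ)|
              = ((if decide ((c i : ℝ) ≤ (k : ℝ) * x i) then (1:ℤ) else -1) : ℝ)
                * ((k : ℝ) * x i - (c i : ℝ)) := by
            intro i
            by_cases h : (c i : ℝ) ≤ (k : ℝ) * x i
            · simp [h, abs_of_nonneg (by linarith : (0:ℝ) ≤ (k : ℝ) * x i - (c i : ℝ))]
            · push_neg at h
              simp [h, not_le.mpr h, abs_of_neg (by linarith : (k : ℝ) * x i - (c i : ℝ) < 0)]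
          rw [Finset.sum_congr rfl fun i _ => habs i]
          push_cast
          rw [add_assoc, ← Finset.sum_add_distrib, sub_eq_add_neg, ← Finset.sum_neg_distrib]
          congr 1
          exact Finset.sum_congr rfl fun i _ => by ring
      -- conclude
      by_contra hO0
      push_neg at hO0
      have hO0' : μ O = 0 := le_antisymm (by simpa using hO0) zero_le
      have hae : (fun x : cube n => f (x : Fin n → ℝ)) =ᵐ[μ] 0 := by
        refine measure_mono_null ?_ hO0'
        intro x hx
        simp only [Set.mem_setOf_eq, Pi.zero_apply] at hx
        by_contra hxO
        exact hx (hvanish x hxO)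
      have hint : ∫ x, f ↑x ∂μ = 0 := integral_eq_zero_of_ae hae
      have := H f hMc ⟨p, p.2, ne_of_gt hfp⟩
      rw [hint] at this
      exact lt_irrefl _ this
  · -- backward
    intro H f hMc hne
    obtain ⟨hcont, hrange, _⟩ := hMc
    obtain ⟨x₀, hx₀c, hx₀⟩ := hne
    haveI : CompactSpace (cube n) := isCompact_iff_compactSpace.mp isCompact_Icc
    set g : cube n → ℝ := fun x => f (x : Fin n → ℝ) with hg
    have hgcont : Continuous g := hcont.restrict
    have hgnn : 0 ≤ g := fun x => (hrange _ x.2).1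
    have hgint : Integrable g μ :=
      hgcont.integrable_of_hasCompactSupport (HasCompactSupport.of_compactSpace g)
    rw [integral_pos_iff_support_of_nonneg hgnn hgint]
    have hx₀pos : 0 < g ⟨x₀, hx₀c⟩ := lt_of_le_of_ne (hgnn _) (Ne.symm hx₀)
    have hopen : IsOpen {x : cube n | 0 < g x} := isOpen_lt continuous_const hgcont
    have hsub : {x : cube n | 0 < g x} ⊆ Function.support g := fun x hx => ne_of_gt hx
    exact lt_of_lt_of_le (H _ hopen ⟨⟨x₀, hx₀c⟩, hx₀pos⟩) (measure_mono hsub)
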